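/- Let x_l < x_r, let β be continuously differentiable on [x_l, x_r] with β(x) ≥ β_0 > 0 for all x, let q and f be continuous on [x_l, x_r], and let u be three times continuously differentiable on [x_l, x_r] satisfying β(x)·u''(x) + β'(x)·u'(x) − q(x)·u(x) + f(x) = 0 for all x. Then there exists a constant C > 0 such that for every n ≥ 1 and every partition x_l = x_0 < x_1 < ... < x_n = x_r with mesh size h = max_k (x_{k+1} − x_k), the function v_h^{new} defined on each element [x_k, x_{k+1}] by v_h^{new}(x) = u_I^k(x) − (β'(x)/(2β(x)))·(x−x_k)(x−x_{k+1})·(u(x_{k+1})−u(x_k))/(x_{k+1}−x_k) + (q(x)/(2β(x)))·(x−x_k)(x−x_{k+1})·u_I^k(x) − (f(x)/(2β(x)))·(x−x_k)(x−x_{k+1}), where u_I^k is the linear interpolant of u on [x_k, x_{k+1}], satisfies |u(x) − v_h^{new}(x)| ≤ C·h^3 for all x in [x_l, x_r]. -/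

import Mathlib

set_option maxHeartbeats 2000000

open Set

lemma my_mono_aux {a b : ℝ} {F F' : ℝ → ℝ}
    (hF : ∀ t ∈ Icc a b, HasDerivWithinAt F (F' t) (Icc a b) t)
    (hF' : ∀ t ∈ Ioo a b, 0 ≤ F' t) : MonotoneOn F (Icc a b) := by
  have key : ∀ t ∈ Ioo a b, HasDerivAt F (F' t) t := fun t ht =>
    (hF t (Ioo_subset_Icc_self ht)).hasDerivAt (Icc_mem_nhds ht.1 ht.2)
  apply monotoneOn_of_deriv_nonneg (convex_Icc a b)
    (fun t ht => (hF t ht).continuousWithinAt)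
  · rw [interior_Icc]
    exact fun t ht => ((key t ht).differentiableAt).differentiableWithinAt
  · rw [interior_Icc]
    intro t ht
    rw [(key t ht).deriv]
    exact hF' t ht

lemma my_abs_sub_le {a b : ℝ} {g g' φ φ' : ℝ → ℝ}
    (hg : ∀ t ∈ Icc a b, HasDerivWithinAt g (g' t) (Icc a b) t)
    (hφ : ∀ t ∈ Icc a b, HasDerivWithinAt φ (φ' t) (Icc a b) t)
    (hb : ∀ t ∈ Icc a b, |g' t| ≤ φ' t) :
    ∀ t ∈ Icc a b, |g t - g a| ≤ φ t - φ a := by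
  intro t ht
  have ha : a ∈ Icc a b := ⟨le_refl a, le_trans ht.1 ht.2⟩
  have h1 : MonotoneOn (fun s => φ s - g s) (Icc a b) :=
    my_mono_aux (fun s hs => (hφ s hs).sub (hg s hs))
      (fun s hs => by
        have := hb s (Ioo_subset_Icc_self hs); have := abs_le.mp this; linarith [this.2])
  have h2 : MonotoneOn (fun s => φ s + g s) (Icc a b) :=
    my_mono_aux (fun s hs => (hφ s hs).add (hg s hs))
      (fun s hs => by
        have := hb s (Ioo_subset_Icc_self hs); have := abs_le.mp this; linarith [this.1])
  have e1 := h1 ha ht ht.1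
  have e2 := h2 ha ht ht.1
  simp only [] at e1 e2
  rw [abs_le]; constructor <;> linarith

lemma my_bound_pow {a b : ℝ} {c : ℝ} (hc : 0 ≤ c) {m : ℕ} {g g' : ℝ → ℝ}
    (hg : ∀ t ∈ Icc a b, HasDerivWithinAt g (g' t) (Icc a b) t)
    (hb : ∀ t ∈ Icc a b, |g' t| ≤ c * (t - a) ^ m) :
    ∀ t ∈ Icc a b, |g t - g a| ≤ c * (t - a) ^ (m + 1) / (m + 1) := by
  have hm1 : (0:ℝ) < (m:ℝ) + 1 := by positivity
  have hφ : ∀ t ∈ Icc a b, HasDerivWithinAt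
      (fun s => c * (s - a) ^ (m + 1) / ((m:ℝ) + 1)) (c * (t - a) ^ m) (Icc a b) t := by
    intro t ht
    have h1 : HasDerivAt (fun s : ℝ => (s - a) ^ (m + 1))
        (((m:ℝ) + 1) * (t - a) ^ m) t := by
      have := ((hasDerivAt_id t).sub_const a).pow (m + 1)
      simpa [Pi.pow_def] using this
    have h2 := h1.const_mul (c / ((m:ℝ) + 1))
    have heq : (fun s : ℝ => c / ((m:ℝ) + 1) * (s - a) ^ (m + 1))
        = fun s => c * (s - a) ^ (m + 1) / ((m:ℝ) + 1) := by funext s; ring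
    rw [heq] at h2
    have hval : c / ((m:ℝ) + 1) * (((m:ℝ) + 1) * (t - a) ^ m)
        = c * (t - a) ^ m := by
      field_simp
    rw [hval] at h2
    exact h2.hasDerivWithinAt
  intro t ht
  have := my_abs_sub_le hg hφ hb t ht
  simp only [sub_self, zero_pow (Nat.succ_ne_zero m), mul_zero, zero_div, sub_zero] at this
  exact this

lemma my_abs4 (x1 x2 x3 x4 : ℝ) : |x1 - x2 + x3 + x4| ≤ |x1| + |x2| + |x3| + |x4| := by
  have h12 : |x1 - x2| ≤ |x1| + |x2| := by
    rw [sub_eq_add_neg]; simpa using abs_add_le x1 (-x2)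
  calc |x1 - x2 + x3 + x4| ≤ |x1 - x2 + x3| + |x4| := abs_add_le _ _
    _ ≤ |x1 - x2| + |x3| + |x4| := by linarith [abs_add_le (x1 - x2) x3]
    _ ≤ |x1| + |x2| + |x3| + |x4| := by linarith

/-- For the Sturm–Liouville equation `β u'' + β' u' − q u + f = 0` on
`[x_l, x_r]` with `β ∈ C¹`, `β ≥ β₀ > 0`, `q, f` continuous and `u ∈ C³`, there is a
constant `C > 0` such that for every partition `x_l = x 0 < x 1 < ⋯ < x n = x_r` with mesh
size `h`, the piecewise modified (bubble-corrected) interpolant `v_h^{new}` satisfies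
`|u t − v_h^{new} t| ≤ C h³` on `[x_l, x_r]`. -/
theorem modified_interpolant_third_order_mesh
    (xl xr β₀ : ℝ) (hlr : xl < xr) (hβ₀ : 0 < β₀)
    (β β' q f u u' u'' u''' : ℝ → ℝ)
    (hβd : ∀ t ∈ Set.Icc xl xr, HasDerivWithinAt β (β' t) (Set.Icc xl xr) t)
    (hβ'c : ContinuousOn β' (Set.Icc xl xr))
    (hβlb : ∀ t ∈ Set.Icc xl xr, β₀ ≤ β t)
    (hq : ContinuousOn q (Set.Icc xl xr))
    (hf : ContinuousOn f (Set.Icc xl xr))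
    (hu' : ∀ t ∈ Set.Icc xl xr, HasDerivWithinAt u (u' t) (Set.Icc xl xr) t)
    (hu'' : ∀ t ∈ Set.Icc xl xr, HasDerivWithinAt u' (u'' t) (Set.Icc xl xr) t)
    (hu''' : ∀ t ∈ Set.Icc xl xr, HasDerivWithinAt u'' (u''' t) (Set.Icc xl xr) t)
    (hu'''c : ContinuousOn u''' (Set.Icc xl xr))
    (hode : ∀ t ∈ Set.Icc xl xr, β t * u'' t + β' t * u' t - q t * u t + f t = 0) :
    ∃ C > 0, ∀ (n : ℕ) (hn : 1 ≤ n) (x : ℕ → ℝ),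
      x 0 = xl → x n = xr → (∀ k < n, x k < x (k + 1)) →
      ∀ H : ℝ, H = (Finset.range n).sup' (Finset.nonempty_range_iff.mpr (by omega))
          (fun k => x (k + 1) - x k) →
      ∀ vh : ℝ → ℝ,
        (∀ k < n, ∀ t ∈ Set.Icc (x k) (x (k + 1)),
          vh t = (u (x k) * (x (k + 1) - t) / (x (k + 1) - x k)
              + u (x (k + 1)) * (t - x k) / (x (k + 1) - x k))
            - β' t / (2 * β t) * (t - x k) * (t - x (k + 1))
              * ((u (x (k + 1)) - u (x k)) / (x (k + 1) - x k))
            + q t / (2 * β t) * (t - x k) * (t - x (k + 1))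
              * (u (x k) * (x (k + 1) - t) / (x (k + 1) - x k)
                + u (x (k + 1)) * (t - x k) / (x (k + 1) - x k))
            - f t / (2 * β t) * (t - x k) * (t - x (k + 1))) →
        ∀ t ∈ Set.Icc xl xr, |u t - vh t| ≤ C * H ^ 3 := by
  have hu''c : ContinuousOn u'' (Set.Icc xl xr) := fun s hs => (hu''' s hs).continuousWithinAt
  obtain ⟨M3₀, hM3₀⟩ := isCompact_Icc.exists_bound_of_continuousOn hu'''c
  obtain ⟨M2₀, hM2₀⟩ := isCompact_Icc.exists_bound_of_continuousOn hu''c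
  obtain ⟨Mb₀, hMb₀⟩ := isCompact_Icc.exists_bound_of_continuousOn hβ'c
  obtain ⟨Mq₀, hMq₀⟩ := isCompact_Icc.exists_bound_of_continuousOn hq
  obtain ⟨M3, hM3n, hM3sup⟩ : ∃ M : ℝ, 0 ≤ M ∧ M3₀ ≤ M := ⟨max M3₀ 0, le_max_right _ _, le_max_left _ _⟩
  obtain ⟨M2, hM2n, hM2sup⟩ : ∃ M : ℝ, 0 ≤ M ∧ M2₀ ≤ M := ⟨max M2₀ 0, le_max_right _ _, le_max_left _ _⟩
  obtain ⟨Mb, hMbn, hMbsup⟩ : ∃ M : ℝ, 0 ≤ M ∧ Mb₀ ≤ M := ⟨max Mb₀ 0, le_max_right _ _, le_max_left _ _⟩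
  obtain ⟨Mq, hMqn, hMqsup⟩ : ∃ M : ℝ, 0 ≤ M ∧ Mq₀ ≤ M := ⟨max Mq₀ 0, le_max_right _ _, le_max_left _ _⟩
  have hM3 : ∀ s ∈ Set.Icc xl xr, |u''' s| ≤ M3 := fun s hs => by
    have := hM3₀ s hs; rw [Real.norm_eq_abs] at this; exact this.trans hM3sup
  have hM2 : ∀ s ∈ Set.Icc xl xr, |u'' s| ≤ M2 := fun s hs => by
    have := hM2₀ s hs; rw [Real.norm_eq_abs] at this; exact this.trans hM2sup
  have hMb : ∀ s ∈ Set.Icc xl xr, |β' s| ≤ Mb := fun s hs => by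
    have := hMb₀ s hs; rw [Real.norm_eq_abs] at this; exact this.trans hMbsup
  have hMq : ∀ s ∈ Set.Icc xl xr, |q s| ≤ Mq := fun s hs => by
    have := hMq₀ s hs; rw [Real.norm_eq_abs] at this; exact this.trans hMqsup
  obtain ⟨L₀, hL₀def⟩ : ∃ L : ℝ, L = xr - xl := ⟨_, rfl⟩
  have hL₀ : 0 < L₀ := by rw [hL₀def]; exact sub_pos.mpr hlr
  obtain ⟨A, hAdef⟩ : ∃ A' : ℝ, A' = 3 * M2 / 2 + M3 * L₀ / 6 := ⟨_, rfl⟩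
  obtain ⟨B, hBdef⟩ : ∃ B' : ℝ, B' = M2 / 2 + M3 * L₀ / 3 := ⟨_, rfl⟩
  have hAn : 0 ≤ A := by rw [hAdef]; positivity
  have hBn : 0 ≤ B := by rw [hBdef]; positivity
  refine ⟨M3 + (Mb * A + Mq * L₀ * B) / (2 * β₀) + 1, by positivity, ?_⟩
  intro n hn x hx0 hxn hxlt H hH vh hvh t ht
  -- monotonicity of the partition
  have hmono : ∀ j, j ≤ n → ∀ i, i ≤ j → x i ≤ x j := by
    intro j
    induction j with
    | zero => intro _ i hi; have : i = 0 := Nat.le_zero.mp hi; rw [this]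
    | succ j ih =>
      intro hj i hi
      by_cases hij : i = j + 1
      · rw [hij]
      · have h1 := ih (by omega) i (by omega)
        have h2 := (hxlt j (by omega)).le
        linarith
  -- mesh size bounds
  have hHpos : 0 < H := by
    have h1 : x 1 - x 0 ≤ H := by
      rw [hH]; exact Finset.le_sup' (fun k => x (k + 1) - x k) (Finset.mem_range.mpr (by omega))
    have h2 := hxlt 0 (by omega)
    linarith
  have hHL : H ≤ L₀ := by
    rw [hH]
    apply Finset.sup'_le
    intro k hk
    have hk' := Finset.mem_range.mp hk
    have h1 : x (k + 1) ≤ x n := hmono n le_rfl (k + 1) (by omega)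
    have h2 : x 0 ≤ x k := hmono k (by omega) 0 (by omega)
    rw [hL₀def, ← hx0, ← hxn]
    linarith
  -- locate t in an element
  have hfind : ∀ m, m ≤ n → 1 ≤ m → t ≤ x m → ∃ k, k < n ∧ x k ≤ t ∧ t ≤ x (k + 1) := by
    intro m
    induction m with
    | zero => intro _ h; omega
    | succ m ih =>
      intro hm _ htm
      by_cases hc : x m ≤ t
      · exact ⟨m, by omega, hc, htm⟩
      · push_neg at hc
        rcases Nat.eq_zero_or_pos m with h0 | h1
        · exfalso; rw [h0, hx0] at hc; exact absurd ht.1 (not_le.mpr hc)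
        · exact ih (by omega) h1 hc.le
  obtain ⟨k, hk, hta, htb⟩ := hfind n le_rfl hn (by rw [hxn]; exact ht.2)
  set a := x k with hadef
  set b := x (k + 1) with hbdef
  have hab : a < b := hxlt k hk
  have hba : 0 < b - a := sub_pos.mpr hab
  have hbane : b - a ≠ 0 := ne_of_gt hba
  have hsub : Set.Icc a b ⊆ Set.Icc xl xr :=
    Set.Icc_subset_Icc (by rw [← hx0]; exact hmono k (by omega) 0 (by omega))
      (by rw [← hxn]; exact hmono n le_rfl (k + 1) (by omega))
  have htab : t ∈ Set.Icc a b := ⟨hta, htb⟩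
  have hbH : b - a ≤ H := by
    rw [hH]; exact Finset.le_sup' (fun k => x (k + 1) - x k) (Finset.mem_range.mpr hk)
  have htaH : t - a ≤ H := by linarith
  have htan : 0 ≤ t - a := by linarith
  have htbH : b - t ≤ H := by linarith
  -- derivatives restricted to [a, b]
  have hd1 : ∀ s ∈ Set.Icc a b, HasDerivWithinAt u (u' s) (Set.Icc a b) s :=
    fun s hs => (hu' s (hsub hs)).mono hsub
  have hd2 : ∀ s ∈ Set.Icc a b, HasDerivWithinAt u' (u'' s) (Set.Icc a b) s :=
    fun s hs => (hu'' s (hsub hs)).mono hsub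
  have hd3 : ∀ s ∈ Set.Icc a b, HasDerivWithinAt u'' (u''' s) (Set.Icc a b) s :=
    fun s hs => (hu''' s (hsub hs)).mono hsub
  -- Taylor chain on [a, b]
  have hA2 : ∀ s ∈ Set.Icc a b, |u'' s - u'' a| ≤ M3 * (s - a) := by
    intro s hs
    have := my_bound_pow (m := 0) hM3n hd3
      (fun s hs => by simpa using hM3 s (hsub hs)) s hs
    simpa using this
  have hD1 : ∀ s ∈ Set.Icc a b, |u' s - u' a| ≤ M2 * (s - a) := by
    intro s hs
    have := my_bound_pow (m := 0) hM2n hd2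
      (fun s hs => by simpa using hM2 s (hsub hs)) s hs
    simpa using this
  have hB1 : ∀ s ∈ Set.Icc a b, |u' s - u' a - u'' a * (s - a)| ≤ M3 * (s - a) ^ 2 / 2 := by
    have hg : ∀ s ∈ Set.Icc a b, HasDerivWithinAt (fun s => u' s - u'' a * s)
        (u'' s - u'' a) (Set.Icc a b) s := by
      intro s hs
      have hlin : HasDerivWithinAt (fun s : ℝ => u'' a * s) (u'' a) (Set.Icc a b) s := by
        simpa using (hasDerivWithinAt_id s (Set.Icc a b)).const_mul (u'' a)
      exact (hd2 s hs).sub hlin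
    intro s hs
    have := my_bound_pow (m := 1) hM3n hg
      (fun s hs => by simpa using hA2 s hs) s hs
    have heq : u' s - u'' a * s - (u' a - u'' a * a) = u' s - u' a - u'' a * (s - a) := by ring
    rw [heq] at this
    calc |u' s - u' a - u'' a * (s - a)| ≤ M3 * (s - a) ^ (1 + 1) / ((1:ℕ) + 1) := this
      _ = M3 * (s - a) ^ 2 / 2 := by norm_num
  have hC1 : ∀ s ∈ Set.Icc a b,
      |u s - (u a + u' a * (s - a) + u'' a * (s - a) ^ 2 / 2)| ≤ M3 * (s - a) ^ 3 / 6 := by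
    have hg : ∀ s ∈ Set.Icc a b,
        HasDerivWithinAt (fun s => u s - u' a * s - u'' a * (s - a) ^ 2 / 2)
        (u' s - u' a - u'' a * (s - a)) (Set.Icc a b) s := by
      intro s hs
      have hlin : HasDerivWithinAt (fun s : ℝ => u' a * s) (u' a) (Set.Icc a b) s := by
        simpa using (hasDerivWithinAt_id s (Set.Icc a b)).const_mul (u' a)
      have h0 : HasDerivAt (fun y : ℝ => (y - a) ^ 2) (2 * (s - a)) s := by
        simpa [Pi.pow_def] using ((hasDerivAt_id s).sub_const a).pow 2
      have hquad : HasDerivWithinAt (fun y : ℝ => u'' a * (y - a) ^ 2 / 2)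
          (u'' a * (s - a)) (Set.Icc a b) s := by
        have h1 := h0.const_mul (u'' a / 2)
        have heqf : (fun y : ℝ => u'' a / 2 * (y - a) ^ 2)
            = fun y : ℝ => u'' a * (y - a) ^ 2 / 2 := by funext y; ring
        have heqv : u'' a / 2 * (2 * (s - a)) = u'' a * (s - a) := by ring
        rw [heqf, heqv] at h1
        exact h1.hasDerivWithinAt
      exact ((hd1 s hs).sub hlin).sub hquad
    intro s hs
    have hM32 : (0:ℝ) ≤ M3 / 2 := by positivity
    have := my_bound_pow (m := 2) hM32 hg
      (fun s hs => by
        have h1 := hB1 s hs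
        calc |u' s - u' a - u'' a * (s - a)| ≤ M3 * (s - a) ^ 2 / 2 := h1
          _ = M3 / 2 * (s - a) ^ 2 := by ring) s hs
    have heq : u s - u' a * s - u'' a * (s - a) ^ 2 / 2
        - (u a - u' a * a - u'' a * (a - a) ^ 2 / 2)
        = u s - (u a + u' a * (s - a) + u'' a * (s - a) ^ 2 / 2) := by ring
    rw [heq] at this
    calc |u s - (u a + u' a * (s - a) + u'' a * (s - a) ^ 2 / 2)|
        ≤ M3 / 2 * (s - a) ^ (2 + 1) / ((2:ℕ) + 1) := this
      _ = M3 * (s - a) ^ 3 / 6 := by norm_num; ring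
  -- notation
  obtain ⟨Rt, hRtdef⟩ : ∃ R : ℝ, R = u t - (u a + u' a * (t - a) + u'' a * (t - a) ^ 2 / 2) := ⟨_, rfl⟩
  obtain ⟨Rb, hRbdef⟩ : ∃ R : ℝ, R = u b - (u a + u' a * (b - a) + u'' a * (b - a) ^ 2 / 2) := ⟨_, rfl⟩
  obtain ⟨Lt, hLtdef⟩ : ∃ L : ℝ, L = u a * (b - t) / (b - a) + u b * (t - a) / (b - a) := ⟨_, rfl⟩
  have htI : t ∈ Set.Icc xl xr := ht
  have hβt : β₀ ≤ β t := hβlb t htI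
  have hβtpos : 0 < β t := lt_of_lt_of_le hβ₀ hβt
  have hβtne : β t ≠ 0 := ne_of_gt hβtpos
  have hft : f t = q t * u t - β t * u'' t - β' t * u' t := by
    have := hode t htI; linarith
  have hbt : (0:ℝ) ≤ b - t := by linarith
  have habs_ta : |t - a| = t - a := abs_of_nonneg htan
  have habs_tb : |t - b| = b - t := by
    rw [abs_sub_comm]; exact abs_of_nonneg hbt
  -- bounds on the four pieces
  have hRtb : |Rt| ≤ M3 * H ^ 3 / 6 := by
    rw [hRtdef]
    have h1 := hC1 t htab
    have h2 : (t - a) ^ 3 ≤ H ^ 3 := pow_le_pow_left₀ htan htaH 3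
    calc |u t - (u a + u' a * (t - a) + u'' a * (t - a) ^ 2 / 2)|
        ≤ M3 * (t - a) ^ 3 / 6 := h1
      _ ≤ M3 * H ^ 3 / 6 := by gcongr
  have hRbb : |Rb| ≤ M3 * (b - a) ^ 3 / 6 := by
    rw [hRbdef]; exact hC1 b ⟨hab.le, le_refl b⟩
  have hRbH : |Rb| ≤ M3 * H ^ 3 / 6 := by
    have h2 : (b - a) ^ 3 ≤ H ^ 3 := pow_le_pow_left₀ hba.le hbH 3
    calc |Rb| ≤ M3 * (b - a) ^ 3 / 6 := hRbb
      _ ≤ M3 * H ^ 3 / 6 := by gcongr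
  have hX2 : |(t - a) / (b - a) * Rb| ≤ M3 * H ^ 3 / 6 := by
    have hfrac : |(t - a) / (b - a)| ≤ 1 := by
      rw [abs_div, habs_ta, abs_of_pos hba]
      exact div_le_one_of_le₀ (by linarith) hba.le
    rw [abs_mul]
    calc |(t - a) / (b - a)| * |Rb| ≤ 1 * (M3 * H ^ 3 / 6) :=
        mul_le_mul hfrac hRbH (abs_nonneg _) zero_le_one
      _ = M3 * H ^ 3 / 6 := one_mul _
  have hd2t : |u'' a - u'' t| ≤ M3 * H := by
    rw [abs_sub_comm]
    calc |u'' t - u'' a| ≤ M3 * (t - a) := hA2 t htab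
      _ ≤ M3 * H := by gcongr
  have hm1 : (t - a) * (b - t) ≤ H * H :=
    mul_le_mul htaH htbH hbt hHpos.le
  have hX3 : |(t - a) * (t - b) * (u'' a - u'' t) / 2| ≤ H * H * (M3 * H) / 2 := by
    have he : |(t - a) * (t - b) * (u'' a - u'' t) / 2|
        = (t - a) * (b - t) * |u'' a - u'' t| / 2 := by
      rw [abs_div, abs_mul, abs_mul, habs_ta, habs_tb]
      norm_num
    rw [he]
    have hm2 : (t - a) * (b - t) * |u'' a - u'' t| ≤ H * H * (M3 * H) :=
      mul_le_mul hm1 hd2t (abs_nonneg _) (by positivity)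
    linarith
  -- slope bound
  have hslope : |(u b - u a) / (b - a) - u' t| ≤ A * H := by
    have hiden : (u b - u a) / (b - a) - u' t
        = (u' a - u' t) + u'' a * (b - a) / 2 + Rb / (b - a) := by
      rw [hRbdef]; field_simp; ring
    have h1 : |u' a - u' t| ≤ M2 * H := by
      rw [abs_sub_comm]
      calc |u' t - u' a| ≤ M2 * (t - a) := hD1 t htab
        _ ≤ M2 * H := by gcongr
    have h2 : |u'' a * (b - a) / 2| ≤ M2 * H / 2 := by
      rw [abs_div, abs_mul, abs_of_pos hba]
      have hm2a := hM2 a (hsub ⟨le_refl a, hab.le⟩)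
      have h2' : |(2:ℝ)| = 2 := by norm_num
      rw [h2']
      gcongr
    have hbaL : b - a ≤ L₀ := le_trans hbH hHL
    have h3 : |Rb / (b - a)| ≤ M3 * L₀ * H / 6 := by
      rw [abs_div, abs_of_pos hba, div_le_iff₀ hba]
      have hsq : (b - a) * (b - a) ≤ L₀ * H :=
        mul_le_mul hbaL hbH hba.le hL₀.le
      have h4 : M3 * ((b - a) * (b - a)) ≤ M3 * (L₀ * H) :=
        mul_le_mul_of_nonneg_left hsq hM3n
      have h5 : M3 * ((b - a) * (b - a)) * (b - a) ≤ M3 * (L₀ * H) * (b - a) :=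
        mul_le_mul_of_nonneg_right h4 hba.le
      calc |Rb| ≤ M3 * (b - a) ^ 3 / 6 := hRbb
        _ = M3 * ((b - a) * (b - a)) * (b - a) / 6 := by ring
        _ ≤ M3 * (L₀ * H) * (b - a) / 6 := (div_le_div_iff_of_pos_right (by norm_num : (0:ℝ) < 6)).mpr h5
        _ = M3 * L₀ * H / 6 * (b - a) := by ring
    rw [hiden]
    calc |(u' a - u' t) + u'' a * (b - a) / 2 + Rb / (b - a)|
        ≤ |(u' a - u' t) + u'' a * (b - a) / 2| + |Rb / (b - a)| := abs_add_le _ _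
      _ ≤ |u' a - u' t| + |u'' a * (b - a) / 2| + |Rb / (b - a)| := by
          linarith [abs_add_le (u' a - u' t) (u'' a * (b - a) / 2)]
      _ ≤ M2 * H + M2 * H / 2 + M3 * L₀ * H / 6 := by linarith
      _ = A * H := by rw [hAdef]; ring
  -- interpolation error bound
  have hLb : |u t - Lt| ≤ B * (H * H) := by
    have hiden : u t - Lt = Rt - (t - a) / (b - a) * Rb + u'' a * ((t - a) * (t - b)) / 2 := by
      rw [hRtdef, hRbdef, hLtdef]; field_simp; ring
    have h3 : |u'' a * ((t - a) * (t - b)) / 2| ≤ M2 * (H * H) / 2 := by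
      have he : |u'' a * ((t - a) * (t - b)) / 2| = |u'' a| * ((t - a) * (b - t)) / 2 := by
        rw [abs_div, abs_mul, abs_mul, habs_ta, habs_tb]
        norm_num
      rw [he]
      have hm2a := hM2 a (hsub ⟨le_refl a, hab.le⟩)
      have hm2 : |u'' a| * ((t - a) * (b - t)) ≤ M2 * (H * H) :=
        mul_le_mul hm2a hm1 (by positivity) hM2n
      linarith
    have he3 : M3 * H ^ 3 ≤ M3 * L₀ * (H * H) := by
      have h := mul_le_mul_of_nonneg_left hHL hM3n
      calc M3 * H ^ 3 = (M3 * H) * (H * H) := by ring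
        _ ≤ (M3 * L₀) * (H * H) := mul_le_mul_of_nonneg_right h (by positivity)
        _ = M3 * L₀ * (H * H) := by ring
    have habs : |Rt - (t - a) / (b - a) * Rb + u'' a * ((t - a) * (t - b)) / 2|
        ≤ |Rt| + |(t - a) / (b - a) * Rb| + |u'' a * ((t - a) * (t - b)) / 2| := by
      have e1 := abs_add_le (Rt - (t - a) / (b - a) * Rb) (u'' a * ((t - a) * (t - b)) / 2)
      have e2 : |Rt - (t - a) / (b - a) * Rb| ≤ |Rt| + |(t - a) / (b - a) * Rb| := by
        rw [sub_eq_add_neg]; simpa using abs_add_le Rt (-((t - a) / (b - a) * Rb))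
      linarith
    rw [hiden]
    calc |Rt - (t - a) / (b - a) * Rb + u'' a * ((t - a) * (t - b)) / 2|
        ≤ |Rt| + |(t - a) / (b - a) * Rb| + |u'' a * ((t - a) * (t - b)) / 2| := habs
      _ ≤ M3 * H ^ 3 / 6 + M3 * H ^ 3 / 6 + M2 * (H * H) / 2 :=
          add_le_add (add_le_add hRtb hX2) h3
      _ ≤ B * (H * H) := by
          rw [hBdef]
          have he4 : (M2 / 2 + M3 * L₀ / 3) * (H * H)
              = M2 * (H * H) / 2 + M3 * L₀ * (H * H) / 3 := by ring
          rw [he4]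
          linarith only [he3]
  -- the bubble term bound
  have hG : |β' t * ((u b - u a) / (b - a) - u' t) + q t * (u t - Lt)|
      ≤ (Mb * A + Mq * L₀ * B) * H := by
    have h1 : |β' t * ((u b - u a) / (b - a) - u' t)| ≤ Mb * (A * H) := by
      rw [abs_mul]
      exact mul_le_mul (hMb t htI) hslope (abs_nonneg _) hMbn
    have h2 : |q t * (u t - Lt)| ≤ Mq * (B * (H * H)) := by
      rw [abs_mul]
      exact mul_le_mul (hMq t htI) hLb (abs_nonneg _) hMqn
    have h3 : Mq * (B * (H * H)) ≤ Mq * L₀ * B * H := by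
      have h := mul_le_mul_of_nonneg_left hHL (by positivity : (0:ℝ) ≤ Mq * B)
      have h' := mul_le_mul_of_nonneg_right h hHpos.le
      calc Mq * (B * (H * H)) = Mq * B * H * H := by ring
        _ ≤ Mq * B * L₀ * H := by linarith
        _ = Mq * L₀ * B * H := by ring
    calc |β' t * ((u b - u a) / (b - a) - u' t) + q t * (u t - Lt)|
        ≤ |β' t * ((u b - u a) / (b - a) - u' t)| + |q t * (u t - Lt)| := abs_add_le _ _
      _ ≤ Mb * (A * H) + Mq * L₀ * B * H := add_le_add h1 (h2.trans h3)
      _ = (Mb * A + Mq * L₀ * B) * H := by ring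
  have hX4 : |(t - a) * (t - b) / (2 * β t)
      * (β' t * ((u b - u a) / (b - a) - u' t) + q t * (u t - Lt))|
      ≤ (Mb * A + Mq * L₀ * B) / (2 * β₀) * H ^ 3 := by
    have he : |(t - a) * (t - b) / (2 * β t)| = (t - a) * (b - t) / (2 * β t) := by
      rw [abs_div, abs_mul, habs_ta, habs_tb, abs_of_pos (by positivity : (0:ℝ) < 2 * β t)]
    rw [abs_mul, he]
    have hdiv : (t - a) * (b - t) / (2 * β t) ≤ H * H / (2 * β₀) :=
      div_le_div₀ (by positivity) hm1 (by positivity) (by linarith)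
    calc (t - a) * (b - t) / (2 * β t)
          * |β' t * ((u b - u a) / (b - a) - u' t) + q t * (u t - Lt)|
        ≤ H * H / (2 * β₀) * ((Mb * A + Mq * L₀ * B) * H) :=
          mul_le_mul hdiv hG (abs_nonneg _) (by positivity)
      _ = (Mb * A + Mq * L₀ * B) / (2 * β₀) * H ^ 3 := by ring
  -- combine
  have hgoal : M3 * H ^ 3 / 6 + M3 * H ^ 3 / 6 + H * H * (M3 * H) / 2
      + (Mb * A + Mq * L₀ * B) / (2 * β₀) * H ^ 3
      ≤ (M3 + (Mb * A + Mq * L₀ * B) / (2 * β₀) + 1) * H ^ 3 := by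
    have p1 : (0:ℝ) ≤ M3 * H ^ 3 := by positivity
    have p2 : (0:ℝ) ≤ H ^ 3 := by positivity
    have pe : H * H * (M3 * H) = M3 * H ^ 3 := by ring
    have pr : (M3 + (Mb * A + Mq * L₀ * B) / (2 * β₀) + 1) * H ^ 3
        = M3 * H ^ 3 + (Mb * A + Mq * L₀ * B) / (2 * β₀) * H ^ 3 + H ^ 3 := by ring
    rw [pe, pr]
    linarith
  have hsum := my_abs4 Rt ((t - a) / (b - a) * Rb)
    ((t - a) * (t - b) * (u'' a - u'' t) / 2)
    ((t - a) * (t - b) / (2 * β t)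
      * (β' t * ((u b - u a) / (b - a) - u' t) + q t * (u t - Lt)))
  have hsum' : |Rt - (t - a) / (b - a) * Rb + (t - a) * (t - b) * (u'' a - u'' t) / 2
      + (t - a) * (t - b) / (2 * β t)
        * (β' t * ((u b - u a) / (b - a) - u' t) + q t * (u t - Lt))|
      ≤ (M3 + (Mb * A + Mq * L₀ * B) / (2 * β₀) + 1) * H ^ 3 := by
    calc _ ≤ _ := hsum
      _ ≤ M3 * H ^ 3 / 6 + M3 * H ^ 3 / 6 + H * H * (M3 * H) / 2
          + (Mb * A + Mq * L₀ * B) / (2 * β₀) * H ^ 3 :=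
          add_le_add (add_le_add (add_le_add hRtb hX2) hX3) hX4
      _ ≤ _ := hgoal
  -- the key identity
  have hid : u t - vh t =
      (Rt - (t - a) / (b - a) * Rb + (t - a) * (t - b) * (u'' a - u'' t) / 2)
      + (t - a) * (t - b) / (2 * β t)
        * (β' t * ((u b - u a) / (b - a) - u' t) + q t * (u t - Lt)) := by
    rw [hvh k hk t htab, hft, hRtdef, hRbdef, hLtdef]
    rw [← hadef, ← hbdef]
    field_simp
    ring
  rw [hid]
  exact hsum'
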